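/- Soundness of suboptimality explanations: if for a foil π_f = ⟨a₁,…,a_k⟩ with visited symbolic states s₀,…,s_k there exist concept subsets Ĉᵢ ⊆ s_{i-1} (for i = 1..k) such that Σᵢ C^abs_S(Ĉᵢ, aᵢ) > C(I, π), then the true symbolic cost of the foil, Σᵢ C^ℂ_S(s_{i-1}, aᵢ), strictly exceeds C(I, π); hence the foil is costlier than the plan π. -/
import Mathlib


/-- The abstract cost of executing action `a` in the presence of the concept set
`X`: the minimum (infimum) of the symbolic cost over all valid symbolic states
containing `X`. -/
noncomputable def abstractCost {Conc A : Type}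
    (SM : Set (Set Conc)) (Cs : Set Conc → A → ℝ) (X : Set Conc) (a : A) : ℝ :=
  sInf {r : ℝ | ∃ s ∈ SM, X ⊆ s ∧ Cs s a = r}

/-- Soundness of suboptimality explanations: if for a foil
`π_f = ⟨a₁,…,a_k⟩` with visited (valid) symbolic states `s₀,…,s_k` there exist
concept subsets `Chatᵢ ⊆ s_{i-1}` with `Σᵢ C^abs(Chatᵢ, aᵢ) > C(I, π)`, then the true
symbolic cost of the foil `Σᵢ C^ℂ(s_{i-1}, aᵢ)` strictly exceeds `C(I, π)`. -/
theorem suboptimality_explanation_sound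
    {Conc A : Type} [Fintype Conc]
    (SM : Set (Set Conc)) (Cs : Set Conc → A → ℝ)
    (k : ℕ) (s : Fin (k + 1) → Set Conc) (a : Fin k → A)
    (hs : ∀ i, s i ∈ SM)
    (Chat : Fin k → Set Conc)
    (hChat : ∀ i : Fin k, Chat i ⊆ s i.castSucc)
    (Cπ : ℝ)
    (hsum : Cπ < ∑ i : Fin k, abstractCost SM Cs (Chat i) (a i)) :
    Cπ < ∑ i : Fin k, Cs (s i.castSucc) (a i) := by
  refine lt_of_lt_of_le hsum (Finset.sum_le_sum fun i _ => ?_)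
  have hbdd : BddBelow {r : ℝ | ∃ t ∈ SM, Chat i ⊆ t ∧ Cs t (a i) = r} := by
    have hfin : ({r : ℝ | ∃ t ∈ SM, Chat i ⊆ t ∧ Cs t (a i) = r}).Finite := by
      apply (Set.finite_range (fun t : Set Conc => Cs t (a i))).subset
      rintro r ⟨t, _, _, rfl⟩
      exact ⟨t, rfl⟩
    exact hfin.bddBelow
  exact csInf_le hbdd ⟨s i.castSucc, hs _, hChat i, rfl⟩
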